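/- (Oppenheim-type inequality) If A and B are positive semidefinite Hermitian N×N matrices, then det(A) · det(B) ≤ det(A ∘ B). -/

import Mathlib

open ComplexOrder Matrix

namespace OppAux


variable {n : Type*} [Fintype n] [DecidableEq n]

lemma triple_swap {n : Type*} [Fintype n] (f : n → n → n → ℂ) :
    (∑ i, ∑ j, ∑ k, f i j k) = ∑ k, ∑ i, ∑ j, f i j k := by
  rw [show (∑ i, ∑ j, ∑ k, f i j k) = ∑ i, ∑ k, ∑ j, f i j k from
    Finset.sum_congr rfl fun i _ => Finset.sum_comm, Finset.sum_comm]

omit [Fintype n] [DecidableEq n] in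
lemma hadamard_isHermitian {A B : Matrix n n ℂ} (hA : A.IsHermitian) (hB : B.IsHermitian) :
    (A ⊙ B).IsHermitian := by
  ext i j
  simp only [conjTranspose_apply, hadamard_apply, star_mul']
  rw [← conjTranspose_apply A, ← conjTranspose_apply B, hA, hB, mul_comm]

open scoped MatrixOrder in
/-- Schur product theorem. -/
lemma hadamard_posSemidef {A B : Matrix n n ℂ} (hA : A.PosSemidef) (hB : B.PosSemidef) :
    (A ⊙ B).PosSemidef := by
  obtain ⟨M, rfl⟩ : ∃ M : Matrix n n ℂ, B = Mᴴ * M :=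
    ⟨CFC.sqrt B, by rw [(CFC.sqrt_nonneg B).posSemidef.1.eq, CFC.sqrt_mul_sqrt_self B hB.nonneg]⟩
  refine .of_dotProduct_mulVec_nonneg
    (hadamard_isHermitian hA.1 (posSemidef_conjTranspose_mul_self M).1) fun x => ?_
  have key : star x ⬝ᵥ (A ⊙ (Mᴴ * M)) *ᵥ x
      = ∑ k, star (fun j => M k j * x j) ⬝ᵥ A *ᵥ (fun j => M k j * x j) := by
    simp only [dotProduct, mulVec, Matrix.mul_apply, hadamard_apply, conjTranspose_apply,
      Pi.star_apply, Finset.mul_sum, Finset.sum_mul, star_mul']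
    rw [triple_swap]
    exact Finset.sum_congr rfl fun k _ => Finset.sum_congr rfl fun i _ =>
      Finset.sum_congr rfl fun j _ => by ring
  rw [key]
  exact Finset.sum_nonneg fun k _ => hA.dotProduct_mulVec_nonneg _

lemma det_nonneg {A : Matrix n n ℂ} (hA : A.PosSemidef) : 0 ≤ A.det := by
  rw [hA.1.det_eq_prod_eigenvalues]
  refine Finset.prod_nonneg fun i _ => ?_
  exact RCLike.ofReal_nonneg.mpr (hA.eigenvalues_nonneg i)

lemma det_eq_zero_of_not_posDef {A : Matrix n n ℂ} (hA : A.PosSemidef) (h : ¬ A.PosDef) :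
    A.det = 0 := by
  rw [posDef_iff_dotProduct_mulVec] at h
  push_neg at h
  obtain ⟨x, hx, hle⟩ := h hA.1
  have h0 : star x ⬝ᵥ A *ᵥ x = 0 := ((hA.dotProduct_mulVec_nonneg x).lt_or_eq.resolve_left hle).symm
  have hzero : A *ᵥ x = 0 := (hA.dotProduct_mulVec_zero_iff x).mp h0
  exact (Matrix.exists_mulVec_eq_zero_iff).mp ⟨x, hx, hzero⟩

lemma one_le_det_one_add {F : Matrix n n ℂ} (hF : F.PosSemidef) : 1 ≤ (1 + F).det := by
  have hH := hF.1
  set U : Matrix n n ℂ := (Matrix.IsHermitian.eigenvectorUnitary hH : Matrix n n ℂ) with hU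
  have hUU : U * star U = 1 := (Matrix.mem_unitaryGroup_iff).mp
    (Matrix.IsHermitian.eigenvectorUnitary hH).2
  have hdecomp : (1 : Matrix n n ℂ) + F
      = U * (1 + diagonal (RCLike.ofReal ∘ hH.eigenvalues)) * star U := by
    rw [mul_add, add_mul, mul_one, hUU]
    congr 1
    exact hH.spectral_theorem
  rw [hdecomp, det_mul, det_mul, mul_comm (det U), mul_assoc, ← det_mul, hUU, det_one, mul_one]
  have : (1 : Matrix n n ℂ) + diagonal (RCLike.ofReal ∘ hH.eigenvalues)
      = diagonal (fun i => 1 + (hH.eigenvalues i : ℂ)) := by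
    rw [← diagonal_one, diagonal_add]
    rfl
  rw [this, det_diagonal]
  have : (∏ i, ((1:ℂ) + (hH.eigenvalues i : ℂ))) = ((∏ i, (1 + hH.eigenvalues i) : ℝ) : ℂ) := by
    push_cast; rfl
  rw [this]
  have h1 : (1 : ℝ) ≤ ∏ i, (1 + hH.eigenvalues i) := by
    calc (1:ℝ) = ∏ _i : n, 1 := by simp
    _ ≤ ∏ i, (1 + hH.eigenvalues i) :=
      Finset.prod_le_prod (fun i _ => zero_le_one)
        (fun i _ => le_add_of_nonneg_right (hF.eigenvalues_nonneg i))
  exact_mod_cast h1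

open scoped MatrixOrder in
lemma det_le_det_add {P E : Matrix n n ℂ} (hP : P.PosSemidef) (hE : E.PosSemidef) :
    P.det ≤ (P + E).det := by
  by_cases hPD : P.PosDef
  · set S := CFC.sqrt P with hSdef
    have hS : S.PosSemidef := (CFC.sqrt_nonneg P).posSemidef
    have hSS : S * S = P := CFC.sqrt_mul_sqrt_self P hP.nonneg
    have hdet : S.det ≠ 0 := by
      intro h0
      have : P.det = 0 := by rw [← hSS, det_mul, h0, zero_mul]
      exact hPD.det_pos.ne' this
    have hSinv : S * S⁻¹ = 1 := Matrix.mul_nonsing_inv S (isUnit_iff_ne_zero.mpr hdet)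
    have hSinv' : S⁻¹ * S = 1 := Matrix.nonsing_inv_mul S (isUnit_iff_ne_zero.mpr hdet)
    have hinvH : (S⁻¹)ᴴ = S⁻¹ := by
      rw [Matrix.conjTranspose_nonsing_inv, hS.1]
    have hF : (S⁻¹ * E * S⁻¹).PosSemidef := by
      have := hE.conjTranspose_mul_mul_same (S⁻¹)
      rwa [hinvH] at this
    have hPE : P + E = S * (1 + S⁻¹ * E * S⁻¹) * S := by
      rw [mul_add, mul_one, add_mul, hSS]
      congr 1
      refine (?_ : S * (S⁻¹ * E * S⁻¹) * S = E).symm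
      calc S * (S⁻¹ * E * S⁻¹) * S = (S * S⁻¹) * E * (S⁻¹ * S) := by
            simp only [Matrix.mul_assoc]
      _ = E := by rw [hSinv, hSinv', Matrix.one_mul, Matrix.mul_one]
    rw [hPE, det_mul, det_mul, mul_comm (det S), mul_assoc, ← det_mul, hSS]
    calc P.det = 1 * P.det := (one_mul _).symm
    _ ≤ (1 + S⁻¹ * E * S⁻¹).det * P.det :=
      mul_le_mul_of_nonneg_right (one_le_det_one_add hF) (det_nonneg hP)
  · rw [det_eq_zero_of_not_posDef hP hPD]
    exact det_nonneg (hP.add hE)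

lemma posDef_submatrix_equiv {m l : Type*} [Fintype m] [DecidableEq m] [Fintype l]
    [DecidableEq l] {M : Matrix m m ℂ} (hM : M.PosDef) (e : l ≃ m) :
    (M.submatrix e e).PosDef := by
  refine .of_dotProduct_mulVec_pos (hM.1.submatrix e) fun x hx => ?_
  have h1 : (M.submatrix e e) *ᵥ x = (M *ᵥ (x ∘ e.symm)) ∘ e :=
    submatrix_mulVec_equiv M x e e
  have h2 : star x ⬝ᵥ ((M *ᵥ (x ∘ e.symm)) ∘ e)
      = star (x ∘ e.symm) ⬝ᵥ M *ᵥ (x ∘ e.symm) := by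
    simp only [dotProduct, Pi.star_apply, Function.comp_apply]
    exact Fintype.sum_equiv e _ _ (fun i => by simp)
  rw [h1, h2]
  refine hM.dotProduct_mulVec_pos (fun hc => hx ?_)
  ext i
  have := congrFun hc (e i)
  simpa using this

lemma one_by_one_posDef {γ : ℂ} (hγ : 0 < γ) (C : Matrix (Fin 1) (Fin 1) ℂ)
    (hC : C 0 0 = γ) : C.PosDef := by
  have : C = diagonal (fun _ => γ) := by
    ext i j
    fin_cases i; fin_cases j
    simpa [diagonal] using hC
  rw [this]
  exact (Matrix.posDef_diagonal_iff).mpr fun _ => hγ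

lemma inv_one_by_one (C : Matrix (Fin 1) (Fin 1) ℂ) : C⁻¹ 0 0 = (C 0 0)⁻¹ := by
  rw [Matrix.inv_def, Matrix.adjugate_fin_one, Matrix.det_fin_one]
  simp [Ring.inverse_eq_inv]

lemma step {n : ℕ}
    (IH : ∀ A B : Matrix (Fin n) (Fin n) ℂ, A.PosSemidef → B.PosSemidef →
      A.det * B.det ≤ (A ⊙ B).det)
    (A B : Matrix (Fin n ⊕ Fin 1) (Fin n ⊕ Fin 1) ℂ) (hA : A.PosDef) (hB : B.PosDef) :
    A.det * B.det ≤ (A ⊙ B).det := by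
  -- diagonal corner entries are positive
  have diagpos : ∀ (M : Matrix (Fin n ⊕ Fin 1) (Fin n ⊕ Fin 1) ℂ), M.PosDef →
      0 < M (Sum.inr 0) (Sum.inr 0) := by
    intro M hM
    have := hM.dotProduct_mulVec_pos (x := Pi.single (Sum.inr 0) 1) (by
      intro h
      have := congrFun h (Sum.inr 0)
      simp [Pi.single_apply] at this)
    simpa [dotProduct, mulVec, Pi.single_apply] using this
  have hα := diagpos A hA
  have hβ := diagpos B hB
  -- blocks
  set A11 := A.toBlocks₁₁ with hA11def
  set A12 := A.toBlocks₁₂ with hA12def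
  set A22 := A.toBlocks₂₂ with hA22def
  set B11 := B.toBlocks₁₁ with hB11def
  set B12 := B.toBlocks₁₂ with hB12def
  set B22 := B.toBlocks₂₂ with hB22def
  have blocks : ∀ (M : Matrix (Fin n ⊕ Fin 1) (Fin n ⊕ Fin 1) ℂ), M.IsHermitian →
      M = fromBlocks M.toBlocks₁₁ M.toBlocks₁₂ M.toBlocks₁₂ᴴ M.toBlocks₂₂ := by
    intro M hM
    have h21 : M.toBlocks₂₁ = M.toBlocks₁₂ᴴ := by
      ext i j
      show M (Sum.inr i) (Sum.inl j) = star (M (Sum.inl j) (Sum.inr i))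
      conv_lhs => rw [← hM]
      rfl
    rw [← h21, fromBlocks_toBlocks]
  have hAblocks := blocks A hA.1
  have hBblocks := blocks B hB.1
  have hA22 : A22.PosDef := one_by_one_posDef hα A22 rfl
  have hB22 : B22.PosDef := one_by_one_posDef hβ B22 rfl
  haveI : Invertible A22 := A22.invertibleOfIsUnitDet (isUnit_iff_ne_zero.mpr hA22.det_pos.ne')
  haveI : Invertible B22 := B22.invertibleOfIsUnitDet (isUnit_iff_ne_zero.mpr hB22.det_pos.ne')
  set A' := A11 - A12 * A22⁻¹ * A12ᴴ with hA'def
  set B' := B11 - B12 * B22⁻¹ * B12ᴴ with hB'def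
  have hA' : A'.PosSemidef := by
    refine (PosDef.fromBlocks₂₂ A11 A12 hA22).mp ?_
    rw [← hAblocks]; exact hA.posSemidef
  have hB' : B'.PosSemidef := by
    refine (PosDef.fromBlocks₂₂ B11 B12 hB22).mp ?_
    rw [← hBblocks]; exact hB.posSemidef
  have detA : A.det = A22.det * A'.det := by
    conv_lhs => rw [hAblocks]
    rw [det_fromBlocks₂₂, invOf_eq_nonsing_inv]
  have detB : B.det = B22.det * B'.det := by
    conv_lhs => rw [hBblocks]
    rw [det_fromBlocks₂₂, invOf_eq_nonsing_inv]
  set EA := A12 * A22⁻¹ * A12ᴴ with hEAdef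
  set EB := B12 * B22⁻¹ * B12ᴴ with hEBdef
  have hEA : EA.PosSemidef := hA22.posSemidef.inv.mul_mul_conjTranspose_same A12
  have hEB : EB.PosSemidef := hB22.posSemidef.inv.mul_mul_conjTranspose_same B12
  have hA11eq : A11 = A' + EA := by rw [hA'def, sub_add_cancel]
  have hB11eq : B11 = B' + EB := by rw [hB'def, sub_add_cancel]
  -- hadamard block structure
  have hABblocks : A ⊙ B = fromBlocks (A11 ⊙ B11) (A12 ⊙ B12) ((A12 ⊙ B12)ᴴ) (A22 ⊙ B22) := by
    conv_lhs => rw [hAblocks, hBblocks]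
    ext i j
    cases i <;> cases j <;> simp [fromBlocks, hadamard_apply, star_mul', mul_comm] <;> rfl
  have hC22 : (A22 ⊙ B22).PosDef :=
    one_by_one_posDef (mul_pos hα hβ) _ rfl
  haveI : Invertible (A22 ⊙ B22) :=
    (A22 ⊙ B22).invertibleOfIsUnitDet (isUnit_iff_ne_zero.mpr hC22.det_pos.ne')
  set S := (A11 ⊙ B11) - (A12 ⊙ B12) * (A22 ⊙ B22)⁻¹ * (A12 ⊙ B12)ᴴ with hSdef
  have detAB : (A ⊙ B).det = (A22 ⊙ B22).det * S.det := by
    conv_lhs => rw [hABblocks]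
    rw [det_fromBlocks₂₂, invOf_eq_nonsing_inv]
  -- rank-one identity
  have rankone : (A12 ⊙ B12) * (A22 ⊙ B22)⁻¹ * (A12 ⊙ B12)ᴴ = EA ⊙ EB := by
    ext i j
    simp only [Matrix.mul_apply, Fin.sum_univ_one, hadamard_apply, conjTranspose_apply,
      hEAdef, hEBdef, star_mul']
    rw [inv_one_by_one, inv_one_by_one, inv_one_by_one]
    simp only [hadamard_apply]
    rw [mul_inv]
    ring
  have hSeq : S = (A' ⊙ B') + ((A' ⊙ EB) + (EA ⊙ B')) := by
    rw [hSdef, rankone, hA11eq, hB11eq]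
    ext i j
    simp only [Matrix.sub_apply, Matrix.add_apply, hadamard_apply]
    ring
  -- determinant comparison
  have hdetS : (A' ⊙ B').det ≤ S.det := by
    rw [hSeq]
    exact det_le_det_add (hadamard_posSemidef hA' hB')
      ((hadamard_posSemidef hA' hEB).add (hadamard_posSemidef hEA hB'))
  have hdet22 : (A22 ⊙ B22).det = A22.det * B22.det := by
    simp [Matrix.det_fin_one, hadamard_apply]
  have hpos22 : 0 < A22.det * B22.det := mul_pos hA22.det_pos hB22.det_pos
  calc A.det * B.det = (A22.det * B22.det) * (A'.det * B'.det) := by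
        rw [detA, detB]; ring
  _ ≤ (A22.det * B22.det) * (A' ⊙ B').det :=
      mul_le_mul_of_nonneg_left (IH A' B' hA' hB') hpos22.le
  _ ≤ (A22.det * B22.det) * S.det :=
      mul_le_mul_of_nonneg_left hdetS hpos22.le
  _ = (A ⊙ B).det := by rw [detAB, hdet22]


theorem aux : ∀ (n : ℕ) (A B : Matrix (Fin n) (Fin n) ℂ), A.PosSemidef → B.PosSemidef →
    A.det * B.det ≤ (A ⊙ B).det := by
  intro n
  induction n with
  | zero =>
    intro A B hA hB
    simp [Matrix.det_fin_zero]
  | succ n IH =>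
    intro A B hA hB
    by_cases hApd : A.PosDef
    · by_cases hBpd : B.PosDef
      · have e : Fin n ⊕ Fin 1 ≃ Fin (n+1) := finSumFinEquiv
        have hAs := posDef_submatrix_equiv hApd e
        have hBs := posDef_submatrix_equiv hBpd e
        have h := step IH _ _ hAs hBs
        have hh : (A.submatrix e e) ⊙ (B.submatrix e e) = (A ⊙ B).submatrix e e := rfl
        rwa [det_submatrix_equiv_self, det_submatrix_equiv_self, hh,
          det_submatrix_equiv_self] at h
      · rw [det_eq_zero_of_not_posDef hB hBpd, mul_zero]
        exact det_nonneg (hadamard_posSemidef hA hB)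
    · rw [det_eq_zero_of_not_posDef hA hApd, zero_mul]
      exact det_nonneg (hadamard_posSemidef hA hB)

end OppAux

theorem oppenheim_det_le {N : ℕ} (A B : Matrix (Fin N) (Fin N) ℂ)
    (hA : A.PosSemidef) (hB : B.PosSemidef) :
    A.det.re * B.det.re ≤ (Matrix.hadamard A B).det.re := by
  have h := OppAux.aux N A B hA hB
  have hkey := (Complex.le_def.mp h).1
  have hBim : B.det.im = 0 := ((Complex.le_def.mp (OppAux.det_nonneg hB)).2).symm
  have hre : (A.det * B.det).re = A.det.re * B.det.re := by
    rw [Complex.mul_re, hBim, mul_zero, sub_zero]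
  rw [hre] at hkey
  exact hkey
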